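/- Let S₁ be the 4×4 upper-triangular matrix with unit diagonal and ε on the superdiagonal, and let S₂ be the 4×4 matrix all of whose rows equal (1, -1, 0, 1). Then ρ(S₁^ℓ · S₂) = 1 + (ℓ(ℓ-1)(ℓ-2)/6)·ε³ for every integer ℓ ≥ 2 and every ε > 0, where ρ is the spectral radius. -/

import Mathlib

open Matrix

open Polynomial in
lemma specRad_rank_one (A : Matrix (Fin 4) (Fin 4) ℂ) (c : ℂ) (w : Fin 4 → ℂ)
    (hA : A * A = c • A) (hw : w ≠ 0) (hAw : A.mulVec w = c • w) :
    spectralRadius ℂ A = (‖c‖₊ : ENNReal) := by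
  have hcmem : c ∈ spectrum ℂ A := by
    rw [spectrum.mem_iff]
    rw [Matrix.isUnit_iff_isUnit_det, isUnit_iff_ne_zero, ne_eq, not_not,
      ← Matrix.exists_mulVec_eq_zero_iff]
    refine ⟨w, hw, ?_⟩
    rw [Algebra.algebraMap_eq_smul_one, Matrix.sub_mulVec, Matrix.smul_mulVec,
      Matrix.one_mulVec, hAw, sub_self]
  have hsub : ∀ z ∈ spectrum ℂ A, z = 0 ∨ z = c := by
    intro z hz
    have hp : (Polynomial.aeval A) (X ^ 2 - C c * X) = 0 := by
      simp [sq, hA, Algebra.smul_def, mul_assoc]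
    have hdeg : 0 < (X ^ 2 - C c * X : ℂ[X]).degree := by
      have : (X ^ 2 - C c * X : ℂ[X]).degree = 2 := by
        compute_degree!
      rw [this]; norm_num
    have := spectrum.map_polynomial_aeval_of_degree_pos A (X ^ 2 - C c * X) hdeg
    rw [hp, spectrum.zero_eq] at this
    have hz' : (X ^ 2 - C c * X : ℂ[X]).eval z = 0 := by
      have : (X ^ 2 - C c * X : ℂ[X]).eval z ∈ ({0} : Set ℂ) := by
        rw [this]; exact Set.mem_image_of_mem _ hz
      simpa using this
    simp only [eval_sub, eval_mul, eval_pow, eval_C, eval_X, sub_eq_zero, sq] at hz'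
    rcases mul_eq_mul_right_iff.mp hz' with h | h
    · right; exact h.symm ▸ rfl
    · left; exact h
  refine le_antisymm ?_ ?_
  · refine iSup₂_le fun z hz => ?_
    rcases hsub z hz with h | h <;> simp [h]
  · exact le_iSup₂ (f := fun z (_ : z ∈ spectrum ℂ A) => (‖z‖₊ : ENNReal)) c hcmem

lemma N_eq : Matrix.of
      (fun i j : Fin 4 => if (j : ℕ) = (i : ℕ) + 1 then (1 : ℝ) else 0) =
    !![0,1,0,0; 0,0,1,0; 0,0,0,1; 0,0,0,0] := by
  ext i j
  fin_cases i <;> fin_cases j <;> simp [Matrix.vecHead, Matrix.vecTail] <;> decide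

lemma pow_S1 (ε : ℝ) (ℓ : ℕ) :
    (1 + ε • Matrix.of
      (fun i j : Fin 4 => if (j : ℕ) = (i : ℕ) + 1 then (1 : ℝ) else 0)) ^ ℓ =
    !![1, ℓ*ε, ((ℓ:ℝ)*((ℓ:ℝ)-1)/2)*ε^2, ((ℓ:ℝ)*((ℓ:ℝ)-1)*((ℓ:ℝ)-2)/6)*ε^3;
       0, 1, ℓ*ε, ((ℓ:ℝ)*((ℓ:ℝ)-1)/2)*ε^2;
       0, 0, 1, ℓ*ε;
       0, 0, 0, 1] := by
  rw [N_eq]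
  induction ℓ with
  | zero =>
    ext i j
    fin_cases i <;> fin_cases j <;> simp [Matrix.one_apply, Matrix.vecHead, Matrix.vecTail]
  | succ n ih =>
    rw [pow_succ, ih]
    ext i j
    fin_cases i <;> fin_cases j <;>
      simp [Matrix.mul_apply, Fin.sum_univ_four, Matrix.one_apply, Matrix.vecHead,
        Matrix.vecTail] <;>
      push_cast <;> ring

/-- The spectral radius of a real square matrix: the maximum of the moduli of its
complex eigenvalues. -/
noncomputable def specRad {d : ℕ} (A : Matrix (Fin d) (Fin d) ℝ) : ENNReal :=
  spectralRadius ℂ (A.map (Complex.ofReal))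

theorem stmt11 (ε : ℝ) (hε : 0 < ε) (S₁ S₂ : Matrix (Fin 4) (Fin 4) ℝ)
    (hS₁ : S₁ = 1 + ε • Matrix.of
      (fun i j : Fin 4 => if (j : ℕ) = (i : ℕ) + 1 then (1 : ℝ) else 0))
    (hS₂ : S₂ = Matrix.of fun _ j : Fin 4 => ![(1 : ℝ), -1, 0, 1] j) :
    ∀ ℓ : ℕ, 2 ≤ ℓ →
      specRad (S₁ ^ ℓ * S₂) =
        ENNReal.ofReal
          (1 + ((ℓ : ℝ) * ((ℓ : ℝ) - 1) * ((ℓ : ℝ) - 2) / 6) * ε ^ 3) := by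
  intro ℓ hℓ
  set a : ℝ := (ℓ:ℝ)*ε with ha
  set b : ℝ := ((ℓ:ℝ)*((ℓ:ℝ)-1)/2)*ε^2 with hb
  set d : ℝ := ((ℓ:ℝ)*((ℓ:ℝ)-1)*((ℓ:ℝ)-2)/6)*ε^3 with hd
  have hprod : S₁ ^ ℓ * S₂ =
      !![1+a+b+d, -(1+a+b+d), 0, 1+a+b+d;
         1+a+b, -(1+a+b), 0, 1+a+b;
         1+a, -(1+a), 0, 1+a;
         1, -1, 0, 1] := by
    rw [hS₁, pow_S1, hS₂]
    ext i j
    fin_cases i <;> fin_cases j <;>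
      simp [Matrix.mul_apply, Fin.sum_univ_four, Matrix.vecHead, Matrix.vecTail,
        ha, hb, hd] <;> ring
  have hmap : (S₁ ^ ℓ * S₂).map (Complex.ofReal) =
      !![((1+a+b+d : ℝ) : ℂ), -((1+a+b+d : ℝ) : ℂ), 0, ((1+a+b+d : ℝ) : ℂ);
         ((1+a+b : ℝ) : ℂ), -((1+a+b : ℝ) : ℂ), 0, ((1+a+b : ℝ) : ℂ);
         ((1+a : ℝ) : ℂ), -((1+a : ℝ) : ℂ), 0, ((1+a : ℝ) : ℂ);
         1, -1, 0, 1] := by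
    rw [hprod]
    ext i j
    fin_cases i <;> fin_cases j <;>
      simp [Matrix.map_apply, Matrix.vecHead, Matrix.vecTail]
  have hkey : spectralRadius ℂ ((S₁ ^ ℓ * S₂).map (Complex.ofReal)) =
      (‖(((1 + d : ℝ)) : ℂ)‖₊ : ENNReal) := by
    rw [hmap]
    apply specRad_rank_one _ _ ![((1+a+b+d : ℝ) : ℂ), ((1+a+b : ℝ) : ℂ), ((1+a : ℝ) : ℂ), 1]
    · ext i j
      fin_cases i <;> fin_cases j <;>
        simp [Matrix.mul_apply, Fin.sum_univ_four, Matrix.vecHead, Matrix.vecTail] <;>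
        push_cast <;> ring
    · intro h
      have := congrFun h 3
      simp at this
    · ext i
      fin_cases i <;>
        simp [Matrix.mulVec, dotProduct, Fin.sum_univ_four, Matrix.vecHead,
          Matrix.vecTail] <;>
        push_cast <;> ring
  have hdnn : 0 ≤ d := by
    have h2 : (2:ℝ) ≤ (ℓ:ℝ) := by exact_mod_cast hℓ
    have h3 : 0 ≤ (ℓ:ℝ)*((ℓ:ℝ)-1)*((ℓ:ℝ)-2)/6 :=
      div_nonneg (mul_nonneg (mul_nonneg (by linarith) (by linarith)) (by linarith)) (by norm_num)
    exact mul_nonneg h3 (by positivity)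
  rw [specRad, hkey, Complex.nnnorm_real, ← enorm_eq_nnnorm, Real.enorm_eq_ofReal (by linarith), hd]
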